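/- Let r ≥ 2 be a natural number, let d' : Fin r → ℤ be a nonincreasing tuple (d' i ≥ d' j whenever i ≤ j), and let d be an integer with d ≥ d' 0. Then there exists a unique nonincreasing tuple d'' : Fin r → ℤ with ∑_{i : Fin r} d'' i = ∑_{i : Fin r} d' i such that for every integer e, ∑_{i : Fin r} max(d'' i + e + 1, 0) = max( max(d + e + 1, 0), ∑_{i : Fin r} max(d' i + e + 1, 0) ). -/

import Mathlib

open Finset

namespace SplitAux

variable {r : ℕ}

lemma sum_update_g (f : Fin r → ℤ) (k : Fin r) (v : ℤ) (g : ℤ → ℤ) :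
    ∑ i, g (Function.update f k v i) = ∑ i, g (f i) + (g v - g (f k)) := by
  have h1 : (fun i => g (Function.update f k v i))
      = Function.update (fun i => g (f i)) k (g v) := by
    funext i
    by_cases h : i = k <;> simp [Function.update_apply, h]
  rw [h1, Finset.sum_update_of_mem (mem_univ k),
    Finset.sum_eq_sum_sdiff_singleton_add (mem_univ k) (fun i => g (f i))]
  ring

lemma h0_grow (d' : Fin r → ℤ) (x : ℤ) (hx : 0 < ∑ i, max (d' i + x + 1) 0)
    (y : ℤ) (hxy : x ≤ y) :
    ∑ i, max (d' i + x + 1) 0 + (y - x) ≤ ∑ i, max (d' i + y + 1) 0 := by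
  have key : ∀ z : ℤ, 0 < ∑ i, max (d' i + z + 1) 0 →
      ∑ i, max (d' i + z + 1) 0 + 1 ≤ ∑ i, max (d' i + (z + 1) + 1) 0 := by
    intro z hz
    obtain ⟨i0, hi0⟩ : ∃ i0, 0 < max (d' i0 + z + 1) 0 := by
      by_contra hcon
      push_neg at hcon
      have : ∑ i, max (d' i + z + 1) 0 ≤ 0 := Finset.sum_nonpos (fun i _ => hcon i)
      omega
    have hlt : ∑ i, max (d' i + z + 1) 0 < ∑ i, max (d' i + (z + 1) + 1) 0 :=
      Finset.sum_lt_sum (fun i _ => by omega) ⟨i0, mem_univ i0, by omega⟩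
    omega
  refine Int.le_induction
    (motive := fun y _ => ∑ i, max (d' i + x + 1) 0 + (y - x) ≤ ∑ i, max (d' i + y + 1) 0)
    (by omega) ?_ y hxy
  intro y hy ihy
  have hpos : 0 < ∑ i, max (d' i + y + 1) 0 := by omega
  have := key y hpos
  omega

lemma count_eq (a : Fin r → ℤ) (e : ℤ) :
    ∑ i, max (a i + e + 1) 0 - ∑ i, max (a i + e) 0
      = ((univ.filter (fun i => 0 ≤ a i + e)).card : ℤ) := by
  rw [← Finset.sum_sub_distrib, ← Finset.sum_boole]
  exact Finset.sum_congr rfl (fun i _ => by by_cases h : 0 ≤ a i + e <;> simp [h] <;> omega)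

lemma sorted_count_iff (a : Fin r → ℤ) (ha : ∀ i j : Fin r, i ≤ j → a j ≤ a i)
    (e : ℤ) (i : Fin r) :
    0 ≤ a i + e ↔ (i : ℕ) < (univ.filter (fun x => 0 ≤ a x + e)).card := by
  constructor
  · intro h
    have hsub : Finset.Iic i ⊆ univ.filter (fun x => 0 ≤ a x + e) := by
      intro x hx
      simp only [Finset.mem_Iic] at hx
      simp only [Finset.mem_filter, mem_univ, true_and]
      have := ha x i hx
      omega
    have := Finset.card_le_card hsub
    rw [Fin.card_Iic] at this
    omega
  · intro h
    by_contra hcon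
    have hsub : univ.filter (fun x => 0 ≤ a x + e) ⊆ Finset.Iio i := by
      intro x hx
      simp only [Finset.mem_filter, mem_univ, true_and] at hx
      simp only [Finset.mem_Iio]
      by_contra hxi
      push_neg at hxi
      have := ha i x hxi
      omega
    have := Finset.card_le_card hsub
    rw [Fin.card_Iio] at this
    omega

lemma eq_of_h0_eq (a b : Fin r → ℤ)
    (ha : ∀ i j : Fin r, i ≤ j → a j ≤ a i)
    (hb : ∀ i j : Fin r, i ≤ j → b j ≤ b i)
    (h : ∀ e : ℤ, ∑ i, max (a i + e + 1) 0 = ∑ i, max (b i + e + 1) 0) : a = b := by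
  have hcount : ∀ e : ℤ, (univ.filter (fun x => 0 ≤ a x + e)).card
      = (univ.filter (fun x => 0 ≤ b x + e)).card := by
    intro e
    have h1 := h e
    have h2 := h (e - 1)
    have ha2 : ∑ i, max (a i + (e - 1) + 1) 0 = ∑ i, max (a i + e) 0 :=
      Finset.sum_congr rfl (fun i _ => by rw [show a i + (e - 1) + 1 = a i + e by ring])
    have hb2 : ∑ i, max (b i + (e - 1) + 1) 0 = ∑ i, max (b i + e) 0 :=
      Finset.sum_congr rfl (fun i _ => by rw [show b i + (e - 1) + 1 = b i + e by ring])
    rw [ha2, hb2] at h2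
    have ca := count_eq a e
    have cb := count_eq b e
    omega
  funext i
  have key : ∀ e : ℤ, (0 ≤ a i + e ↔ 0 ≤ b i + e) := by
    intro e
    rw [sorted_count_iff a ha e i, sorted_count_iff b hb e i, hcount e]
  have k1 := key (-a i)
  have k2 := key (-b i)
  omega

lemma exists_aux (r : ℕ) (hr : 2 ≤ r) (d' : Fin r → ℤ)
    (hd' : ∀ i j : Fin r, i ≤ j → d' j ≤ d' i) (n : ℕ) :
    ∃ a : Fin r → ℤ,
      (∀ i j : Fin r, i ≤ j → a j ≤ a i) ∧
      (∑ i, a i = ∑ i, d' i) ∧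
      (∀ e : ℤ, ∑ i, max (a i + e + 1) 0 =
        max (max ((d' ⟨0, by have := hd'; omega⟩ + (n : ℤ)) + e + 1) 0) (∑ i, max (d' i + e + 1) 0)) := by
  induction n with
  | zero =>
    refine ⟨d', hd', rfl, fun e => ?_⟩
    have h1 : max (d' ⟨0, by omega⟩ + e + 1) 0 ≤ ∑ i, max (d' i + e + 1) 0 :=
      Finset.single_le_sum (f := fun i => max (d' i + e + 1) 0)
        (fun i _ => le_max_right _ _) (mem_univ (⟨0, by omega⟩ : Fin r))
    push_cast
    omega
  | succ n ih =>
    obtain ⟨a, ha, hsum, hid⟩ := ih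
    set z0 : Fin r := ⟨0, by omega⟩ with hz0
    set z1 : Fin r := ⟨1, by omega⟩ with hz1
    set d : ℤ := d' z0 + (n : ℤ) with hddef
    have hz0le : ∀ i : Fin r, z0 ≤ i := fun i => by simp [hz0, Fin.le_def]
    have hz01 : z0 ≠ z1 := by simp [hz0, hz1, Fin.ext_iff]
    have hne0 : ∀ i : Fin r, i ≠ z0 → z1 ≤ i := by
      intro i hi
      rw [Fin.le_def]
      have hv : (i : ℕ) ≠ 0 := by
        intro h
        exact hi (Fin.ext (by simp [hz0, h]))
      simp only [hz1]
      omega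
    have hH0 : ∀ e : ℤ, 0 ≤ ∑ i, max (d' i + e + 1) 0 :=
      fun e => Finset.sum_nonneg fun i _ => le_max_right _ _
    have hd'le : ∀ i, d' i ≤ d := fun i => le_trans (hd' z0 i (hz0le i)) (by omega)
    have hHd : ∑ i, max (d' i + (-d - 1) + 1) 0 = 0 :=
      Finset.sum_eq_zero fun i _ => by have := hd'le i; omega
    -- a z0 = d
    have hub : a z0 ≤ d := by
      have h1 := hid (-d - 1)
      rw [hHd] at h1
      have h1' : ∑ i, max (a i + (-d - 1) + 1) 0 = 0 := by rw [h1]; omega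
      have := (Finset.sum_eq_zero_iff_of_nonneg
        (fun i _ => le_max_right (a i + (-d - 1) + 1) 0)).mp h1' z0 (mem_univ z0)
      omega
    have ha0 : a z0 = d := by
      by_contra hne
      have hz : ∑ i, max (a i + (-d) + 1) 0 = 0 := Finset.sum_eq_zero fun i _ => by
        have := ha z0 i (hz0le i); omega
      have h2 := hid (-d)
      rw [hz] at h2
      have := hH0 (-d)
      omega
    -- the greatest e with h'(e) ≤ d + e + 1
    have hbddT : ∀ e : ℤ, (∑ i, max (d' i + e + 1) 0) ≤ d + e + 1 →
        e ≤ d - d' z0 - d' z1 - 1 := by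
      intro e he
      have hpair : max (d' z0 + e + 1) 0 + max (d' z1 + e + 1) 0
          ≤ ∑ i, max (d' i + e + 1) 0 := by
        have hs := Finset.sum_le_sum_of_subset_of_nonneg
          (Finset.subset_univ ({z0, z1} : Finset (Fin r)))
          (fun i _ _ => le_max_right (d' i + e + 1) 0)
        rwa [Finset.sum_pair hz01] at hs
      omega
    obtain ⟨e2, he2T, he2max⟩ := Int.exists_greatest_of_bdd
      (P := fun e => (∑ i, max (d' i + e + 1) 0) ≤ d + e + 1)
      ⟨d - d' z0 - d' z1 - 1, fun z hz => hbddT z hz⟩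
      ⟨-d - 1, by show (∑ i, max (d' i + (-d - 1) + 1) 0) ≤ d + (-d - 1) + 1
                  rw [hHd]; omega⟩
    have he2ge : -d - 1 ≤ e2 := he2max (-d - 1)
      (by show (∑ i, max (d' i + (-d - 1) + 1) 0) ≤ d + (-d - 1) + 1
          rw [hHd]; omega)
    have hstep1 : d + e2 + 3 ≤ ∑ i, max (d' i + (e2 + 1) + 1) 0 := by
      by_contra hcon
      have h1 : (∑ i, max (d' i + (e2 + 1) + 1) 0) ≤ d + (e2 + 1) + 1 := by omega
      have := he2max _ h1
      omega
    have hnotT : ∀ e : ℤ, e2 < e → d + e + 2 ≤ ∑ i, max (d' i + e + 1) 0 := by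
      intro e hee
      have hpos : 0 < ∑ i, max (d' i + (e2 + 1) + 1) 0 := by omega
      have := h0_grow d' (e2 + 1) hpos e (by omega)
      omega
    have hT : ∀ e : ℤ, -d - 1 ≤ e → e ≤ e2 → (∑ i, max (d' i + e + 1) 0) ≤ d + e + 1 := by
      intro e h1 h2
      by_contra hcon
      push_neg at hcon
      rcases eq_or_lt_of_le h2 with h | h
      · rw [h] at hcon; omega
      · have hpos : 0 < ∑ i, max (d' i + e + 1) 0 := by omega
        have := h0_grow d' e hpos e2 (by omega)
        omega
    set b : ℤ := -e2 - 1 with hbdef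
    have hbd : b ≤ d := by omega
    have hhae2 : ∑ i, max (a i + e2 + 1) 0 = d + e2 + 1 := by
      rw [hid e2]
      have := hT e2 he2ge le_rfl
      omega
    have hhae21 : ∑ i, max (a i + (e2 + 1) + 1) 0 = ∑ i, max (d' i + (e2 + 1) + 1) 0 := by
      rw [hid (e2 + 1)]
      omega
    -- a z1 ≥ b
    have ha1 : b ≤ a z1 := by
      by_contra hcon
      push_neg at hcon
      have hsum1 : ∑ i, max (a i + (e2 + 1) + 1) 0 = max (a z0 + (e2 + 1) + 1) 0 :=
        Finset.sum_eq_single_of_mem z0 (mem_univ z0) (fun i _ hi => by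
          have h1i := hne0 i hi
          have := ha z1 i h1i
          omega)
      rw [ha0] at hsum1
      omega
    -- j : greatest index with a j ≥ b
    have hfilne : z0 ∈ univ.filter (fun x => b ≤ a x) := by
      simp only [Finset.mem_filter, mem_univ, true_and]
      omega
    set j := (univ.filter (fun x => b ≤ a x)).max' ⟨z0, hfilne⟩ with hjdef
    have hjmem := Finset.max'_mem (univ.filter (fun x => b ≤ a x)) ⟨z0, hfilne⟩
    have hjb : b ≤ a j := by
      rw [← hjdef] at hjmem
      simpa using hjmem
    have hj1 : z1 ≤ j := Finset.le_max' _ z1 (by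
      simp only [Finset.mem_filter, mem_univ, true_and]; exact ha1)
    have hjz0 : j ≠ z0 := by
      intro h
      rw [h] at hj1
      exact hz01 (le_antisymm (hz0le z1) hj1)
    have hjgt : ∀ i, j < i → a i < b := by
      intro i hi
      by_contra hcon
      push_neg at hcon
      have : i ≤ j := Finset.le_max' _ i (by
        simp only [Finset.mem_filter, mem_univ, true_and]; exact hcon)
      omega
    have hjeq : a j = b := by
      rcases eq_or_lt_of_le he2ge with hcase | hcase
      · have := ha z0 j (hz0le j)
        omega
      · by_contra hne
        have hjb1 : -e2 ≤ a j := by omega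
        have hz0b1 : -e2 ≤ a z0 := by omega
        -- slope at e2 would be ≥ 2
        have hz0j : z0 ≠ j := fun h => hjz0 h.symm
        have hsub : ∑ i ∈ ({z0, j} : Finset (Fin r)),
            (max (a i + e2 + 1) 0 - max (a i + e2) 0)
            ≤ ∑ i, (max (a i + e2 + 1) 0 - max (a i + e2) 0) :=
          Finset.sum_le_sum_of_subset_of_nonneg (Finset.subset_univ _)
            (fun i _ _ => by omega)
        rw [Finset.sum_pair hz0j] at hsub
        have hsplit : ∑ i, (max (a i + e2 + 1) 0 - max (a i + e2) 0)
            = ∑ i, max (a i + e2 + 1) 0 - ∑ i, max (a i + e2) 0 :=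
          Finset.sum_sub_distrib _ _
        have h1 := hid (e2 - 1)
        have hrw : ∑ i, max (a i + (e2 - 1) + 1) 0 = ∑ i, max (a i + e2) 0 :=
          Finset.sum_congr rfl (fun i _ => by rw [show a i + (e2 - 1) + 1 = a i + e2 by ring])
        rw [hrw] at h1
        have hH1 := hH0 (e2 - 1)
        omega
    -- build c
    set c := Function.update (Function.update a z0 (d + 1)) j (b - 1) with hcdef
    have hupj : Function.update a z0 (d + 1) j = a j := by
      rw [Function.update_apply, if_neg hjz0]
    have hcsum : ∀ g : ℤ → ℤ,
        ∑ i, g (c i) = ∑ i, g (a i) + (g (d + 1) - g d) + (g (b - 1) - g b) := by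
      intro g
      rw [hcdef, sum_update_g _ j (b - 1) g, sum_update_g a z0 (d + 1) g, hupj, ha0, hjeq]
    have hcval : ∀ i : Fin r, c i = if i = j then b - 1 else if i = z0 then d + 1 else a i := by
      intro i
      rw [hcdef, Function.update_apply, Function.update_apply]
    have hcsorted : ∀ i i' : Fin r, i ≤ i' → c i' ≤ c i := by
      intro i i' hii'
      have hgen := ha i i' hii'
      have haz0i := ha z0 i (hz0le i)
      have haz0i' := ha z0 i' (hz0le i')
      rw [hcval i, hcval i']
      by_cases h1 : i' = j
      · rw [if_pos h1]
        by_cases h2 : i = j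
        · rw [if_pos h2]
        · rw [if_neg h2]
          by_cases h4 : i = z0
          · rw [if_pos h4]; omega
          · rw [if_neg h4]
            have : a j ≤ a i := by rw [← h1]; exact hgen
            omega
      · rw [if_neg h1]
        by_cases h3 : i' = z0
        · -- then i = z0
          have hi : i = z0 := by
            have := hii'
            rw [h3] at this
            exact le_antisymm this (hz0le i)
          have hij : i ≠ j := by rw [hi]; exact fun h => hjz0 h.symm
          rw [if_pos h3, if_neg hij, if_pos hi]
        · rw [if_neg h3]
          by_cases h2 : i = j
          · rw [if_pos h2]
            have hjlt : j < i' := lt_of_le_of_ne (h2 ▸ hii') (fun h => h1 h.symm)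
            have := hjgt i' hjlt
            omega
          · rw [if_neg h2]
            by_cases h4 : i = z0
            · rw [if_pos h4]
              rw [h4] at hgen
              omega
            · rw [if_neg h4]
              exact hgen
    have hcsum' : ∑ i, c i = ∑ i, d' i := by
      have h1 := hcsum (fun x => x)
      beta_reduce at h1
      rw [h1, hsum]
      ring
    have hcid : ∀ e : ℤ, ∑ i, max (c i + e + 1) 0
        = max (max ((d + 1) + e + 1) 0) (∑ i, max (d' i + e + 1) 0) := by
      intro e
      have h1 := hcsum (fun x => max (x + e + 1) 0)
      beta_reduce at h1
      rw [hid e] at h1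
      rw [h1]
      have h2 := hH0 e
      rcases le_or_gt e (-d - 2) with hc1 | hc1
      · omega
      · rcases le_or_gt e e2 with hc2 | hc2
        · have h3 := hT e (by omega) hc2
          omega
        · have h3 := hnotT e hc2
          omega
    refine ⟨c, hcsorted, hcsum', fun e => ?_⟩
    rw [hcid e]
    push_cast
    omega

end SplitAux

/-- Given a nonincreasing tuple `d'` and an integer `d ≥ d' 0`, there is a unique
nonincreasing tuple `d''` of the same total sum whose `h⁰`-function is the pointwise
maximum of the `h⁰`-function of `O(d)` and that of `d'`. -/
theorem existsUnique_splitting_type_max_h0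
    (r : ℕ) (hr : 2 ≤ r) (d' : Fin r → ℤ)
    (hd' : ∀ i j : Fin r, i ≤ j → d' j ≤ d' i)
    (d : ℤ) (hd : d' ⟨0, by omega⟩ ≤ d) :
    ∃! d'' : Fin r → ℤ,
      (∀ i j : Fin r, i ≤ j → d'' j ≤ d'' i) ∧
      (∑ i : Fin r, d'' i = ∑ i : Fin r, d' i) ∧
      (∀ e : ℤ, ∑ i : Fin r, max (d'' i + e + 1) 0 =
        max (max (d + e + 1) 0) (∑ i : Fin r, max (d' i + e + 1) 0)) := by
  obtain ⟨a, ha, hsum, hid⟩ :=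
    SplitAux.exists_aux r hr d' hd' (d - d' ⟨0, by omega⟩).toNat
  have hdn : d' ⟨0, by omega⟩ + ((d - d' ⟨0, by omega⟩).toNat : ℤ) = d := by
    rw [Int.toNat_of_nonneg (by omega)]
    ring
  rw [hdn] at hid
  refine ⟨a, ⟨ha, hsum, hid⟩, ?_⟩
  rintro y ⟨hy1, hy2, hy3⟩
  apply SplitAux.eq_of_h0_eq y a hy1 ha
  intro e
  rw [hy3 e, hid e]
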